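/- Let n ≥ 2 and let A = {a₁,…,aₘ} with 0 < a₁ < a₂ < … < aₘ be positive integers. Then A has the weak uniqueness property (any two A-tuples of the same length representing the same number in base n are equal) if and only if the shifted set B = {0, a₂−a₁, …, aₘ−a₁} has the uniqueness property (every nonnegative integer has at most one B-expansion with nonzero leading digit). -/

import Mathlib

/-- `l` is an `A`-expansion of `k` in base `n`: all digits in `A`, nonzero leading digit,
and value `k`. The empty list is the expansion of `0`. -/
def IsExpansion (n : ℕ) (A : Finset ℕ) (k : ℕ) (l : List ℕ) : Prop :=
  (∀ d ∈ l, d ∈ A) ∧ l.getLast? ≠ some 0 ∧ Nat.ofDigits n l = k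

/-- Every nonnegative integer has at most one `A`-expansion in base `n`. -/
def UniqueExpansions (n : ℕ) (A : Finset ℕ) : Prop :=
  ∀ k : ℕ, ∀ l₁ l₂ : List ℕ, IsExpansion n A k l₁ → IsExpansion n A k l₂ → l₁ = l₂

/-- The family `f` generates a free semigroup under composition: distinct nonempty
words give distinct composed functions. Composition is left-to-right:
`[u₁,…,u_p] ↦ f u₁ ∘ ⋯ ∘ f u_p`. -/
def FreeComp {α ι : Type*} (f : ι → α → α) : Prop :=
  ∀ w₁ w₂ : List ι, w₁ ≠ [] → w₂ ≠ [] →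
    (w₁.map f).foldr (· ∘ ·) id = (w₂.map f).foldr (· ∘ ·) id → w₁ = w₂

lemma ofDigits_map_add (n a : ℕ) (l : List ℕ) :
    Nat.ofDigits n (l.map (· + a)) =
      Nat.ofDigits n l + Nat.ofDigits n (List.replicate l.length a) := by
  induction l with
  | nil => simp
  | cons x l ih =>
    simp only [List.map_cons, Nat.ofDigits_cons, ih, List.length_cons, List.replicate_succ]
    push_cast
    ring

lemma ofDigits_replicate_zero (n k : ℕ) : Nat.ofDigits n (List.replicate k 0) = 0 := by
  induction k with
  | zero => simp
  | succ k ih => simp [List.replicate_succ, Nat.ofDigits_cons, ih]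

/-- remove trailing zeros -/
def trimz (l : List ℕ) : List ℕ := (l.reverse.dropWhile (· == 0)).reverse

lemma exists_trimz (l : List ℕ) : ∃ k, l = trimz l ++ List.replicate k 0 := by
  refine ⟨(l.reverse.takeWhile (· == 0)).length, ?_⟩
  have h : l.reverse.takeWhile (· == 0) =
      List.replicate (l.reverse.takeWhile (· == 0)).length 0 := by
    rw [List.eq_replicate_iff]
    refine ⟨rfl, fun b hb => ?_⟩
    have := List.mem_takeWhile_imp hb
    simpa using this
  conv_lhs => rw [← l.reverse_reverse,
    ← List.takeWhile_append_dropWhile (p := (· == 0)) (l := l.reverse)]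
  rw [List.reverse_append, ← List.reverse_replicate, ← h]
  rfl

lemma trimz_getLast? (l : List ℕ) : (trimz l).getLast? ≠ some 0 := by
  unfold trimz
  rw [List.getLast?_reverse]
  intro h
  have := List.head?_dropWhile_not (· == 0) l.reverse
  rw [h] at this
  simpa using this

lemma trimz_subset (l : List ℕ) : ∀ d ∈ trimz l, d ∈ l := by
  intro d hd
  unfold trimz at hd
  rw [List.mem_reverse] at hd
  have := (List.dropWhile_sublist (l := l.reverse) (· == 0)).subset hd
  simpa using this

lemma ofDigits_trimz (n : ℕ) (l : List ℕ) :
    Nat.ofDigits n (trimz l) = Nat.ofDigits n l := by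
  obtain ⟨k, hk⟩ := exists_trimz l
  conv_rhs => rw [hk]
  rw [Nat.ofDigits_append, ofDigits_replicate_zero, mul_zero, add_zero]

lemma key_aux (n : ℕ) (A : Finset ℕ) (hA : A.Nonempty)
    (hU : ∀ l₁ l₂ : List ℕ, (∀ d ∈ l₁, d ∈ A) → (∀ d ∈ l₂, d ∈ A) →
        l₁.length = l₂.length → Nat.ofDigits n l₁ = Nat.ofDigits n l₂ → l₁ = l₂)
    (k : ℕ) (l₁ l₂ : List ℕ)
    (h₁ : IsExpansion n (A.image (fun x => x - A.min' hA)) k l₁)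
    (h₂ : IsExpansion n (A.image (fun x => x - A.min' hA)) k l₂)
    (hle : l₁.length ≤ l₂.length) : l₁ = l₂ := by
  set a := A.min' hA with ha
  have haA : a ∈ A := A.min'_mem hA
  have hdig : ∀ {l : List ℕ}, (∀ d ∈ l, d ∈ A.image (fun x => x - a)) →
      ∀ d ∈ l.map (· + a), d ∈ A := by
    intro l hl d hd
    rw [List.mem_map] at hd
    obtain ⟨b, hb, rfl⟩ := hd
    obtain ⟨x, hx, rfl⟩ := Finset.mem_image.mp (hl b hb)
    rwa [Nat.sub_add_cancel (A.min'_le x hx)]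
  set u := l₁.map (· + a) ++ List.replicate (l₂.length - l₁.length) a with hu
  set v := l₂.map (· + a) with hv
  have huA : ∀ d ∈ u, d ∈ A := by
    intro d hd
    rcases List.mem_append.mp hd with hd | hd
    · exact hdig h₁.1 d hd
    · rw [List.eq_of_mem_replicate hd]; exact haA
  have hvA : ∀ d ∈ v, d ∈ A := hdig h₂.1
  have hlen : u.length = v.length := by
    simp [hu, hv, Nat.add_sub_cancel' hle]
  have hval : Nat.ofDigits n u = Nat.ofDigits n v := by
    rw [hu, hv, Nat.ofDigits_append, ofDigits_map_add, ofDigits_map_add, h₁.2.2, h₂.2.2,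
      List.length_map]
    have : List.replicate l₂.length a =
        List.replicate l₁.length a ++ List.replicate (l₂.length - l₁.length) a := by
      rw [← List.replicate_add, Nat.add_sub_cancel' hle]
    rw [this, Nat.ofDigits_append, List.length_replicate]
    ring
  have huv : u = v := hU u v huA hvA hlen hval
  rcases eq_or_lt_of_le hle with heq | hlt
  · have : l₁.map (· + a) = l₂.map (· + a) := by
      rw [hu, heq, Nat.sub_self, List.replicate_zero, List.append_nil] at huv
      exact huv
    exact List.map_injective_iff.mpr (add_left_injective a) this
  · exfalso
    have hul : u.getLast? = some a := by
      rw [hu, List.getLast?_append, List.getLast?_replicate]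
      simp [Nat.sub_eq_zero_iff_le, not_le.mpr hlt]
    have hl₂ne : l₂ ≠ [] := by
      intro h
      rw [h] at hlt
      simp at hlt
    obtain ⟨b, hb⟩ := List.getLast?_isSome.mpr hl₂ne |> Option.isSome_iff_exists.mp
    have hvl : v.getLast? = some (b + a) := by
      rw [hv, List.getLast?_map, hb]; rfl
    rw [huv, hvl] at hul
    have hba := Option.some.inj hul
    have hb0 : b = 0 := by omega
    exact h₂.2.1 (hb0 ▸ hb)

theorem stmt5 (n : ℕ) (hn : 2 ≤ n) (A : Finset ℕ) (hA : A.Nonempty)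
    (hpos : ∀ x ∈ A, 0 < x) :
    (∀ l₁ l₂ : List ℕ, (∀ d ∈ l₁, d ∈ A) → (∀ d ∈ l₂, d ∈ A) →
        l₁.length = l₂.length → Nat.ofDigits n l₁ = Nat.ofDigits n l₂ → l₁ = l₂) ↔
      UniqueExpansions n (A.image (fun x => x - A.min' hA)) := by
  set a := A.min' hA with ha
  constructor
  · intro hU k l₁ l₂ h₁ h₂
    rcases le_total l₁.length l₂.length with h | h
    · exact key_aux n A hA hU k l₁ l₂ h₁ h₂ h
    · exact (key_aux n A hA hU k l₂ l₁ h₂ h₁ h).symm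
  · intro hB l₁ l₂ hA₁ hA₂ hlen hval
    set m₁ := l₁.map (· - a) with hm₁
    set m₂ := l₂.map (· - a) with hm₂
    have hback : ∀ (l : List ℕ), (∀ d ∈ l, d ∈ A) → (l.map (· - a)).map (· + a) = l := by
      intro l hl
      rw [List.map_map]
      conv_rhs => rw [← List.map_id l]
      apply List.map_congr_left
      intro x hx
      simp [Nat.sub_add_cancel (A.min'_le x (hl x hx))]
      exact Nat.sub_add_cancel (A.min'_le x (hl x hx))
    have hmval : Nat.ofDigits n m₁ = Nat.ofDigits n m₂ := by
      have e₁ : Nat.ofDigits n l₁ =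
          Nat.ofDigits n m₁ + Nat.ofDigits n (List.replicate m₁.length a) := by
        conv_lhs => rw [← hback l₁ hA₁]
        rw [ofDigits_map_add]
      have e₂ : Nat.ofDigits n l₂ =
          Nat.ofDigits n m₂ + Nat.ofDigits n (List.replicate m₂.length a) := by
        conv_lhs => rw [← hback l₂ hA₂]
        rw [ofDigits_map_add]
      have hml : m₁.length = m₂.length := by simp [hm₁, hm₂, hlen]
      rw [e₁, e₂, hml] at hval
      omega
    have hmB : ∀ (l : List ℕ), (∀ d ∈ l, d ∈ A) →
        ∀ d ∈ l.map (· - a), d ∈ A.image (fun x => x - a) := by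
      intro l hl d hd
      rw [List.mem_map] at hd
      obtain ⟨x, hx, rfl⟩ := hd
      exact Finset.mem_image.mpr ⟨x, hl x hx, rfl⟩
    have hexp : ∀ (m : List ℕ), (∀ d ∈ m, d ∈ A.image (fun x => x - a)) →
        IsExpansion n (A.image (fun x => x - a)) (Nat.ofDigits n m) (trimz m) :=
      fun m hm => ⟨fun d hd => hm d (trimz_subset m d hd), trimz_getLast? m,
        ofDigits_trimz n m⟩
    have ht : trimz m₁ = trimz m₂ := by
      apply hB (Nat.ofDigits n m₁) _ _ (hexp m₁ (hmB l₁ hA₁))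
      rw [hmval]
      exact hexp m₂ (hmB l₂ hA₂)
    have hm : m₁ = m₂ := by
      obtain ⟨k₁, hk₁⟩ := exists_trimz m₁
      obtain ⟨k₂, hk₂⟩ := exists_trimz m₂
      rw [ht] at hk₁
      have hml : m₁.length = m₂.length := by simp [hm₁, hm₂, hlen]
      have e1 := congrArg List.length hk₁
      have e2 := congrArg List.length hk₂
      simp only [List.length_append, List.length_replicate] at e1 e2
      have : k₁ = k₂ := by omega
      rw [hk₁, this, ← hk₂]
    calc l₁ = m₁.map (· + a) := (hback l₁ hA₁).symm
      _ = m₂.map (· + a) := by rw [hm]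
      _ = l₂ := hback l₂ hA₂
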